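/- Suppose ⟨I_δ : δ ∈ S⟩ is a family of ideals indexed by a set S of ordinals below κ, each I_δ an ideal on a set C_δ ⊆ δ, and each I_δ is σ-indecomposable for a fixed regular uncountable σ. Define A ∈ I iff there exists a club E ⊆ κ such that for all δ ∈ E ∩ S, A ∩ E ∩ C_δ ∈ I_δ. If σ < κ and κ is regular uncountable, then I is σ-indecomposable: any union of a ⊆-increasing σ-sequence of sets in I is in I. -/

import Mathlib

/-- `E` is a closed unbounded subset of (the ordinals below) `κ`. -/
def IsClubIn (E : Set Ordinal) (κ : Ordinal) : Prop :=
  E ⊆ Set.Iio κ ∧ (∀ a < κ, ∃ b ∈ E, a ≤ b) ∧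
    (∀ a < κ, a ≠ 0 → sSup (E ∩ Set.Iio a) = a → a ∈ E)

/-- Membership in the ideal `I = id_p(C̄, Ī)` on `κ`. -/
def MemIdP (κ : Ordinal) (S : Set Ordinal) (C : Ordinal → Set Ordinal)
    (I : Ordinal → Set (Set Ordinal)) (A : Set Ordinal) : Prop :=
  ∃ E, IsClubIn E κ ∧ ∀ δ ∈ E ∩ S, A ∩ E ∩ C δ ∈ I δ

universe u

lemma isClubIn_iInter {κ : Cardinal.{u}} (hreg : κ.IsRegular) (hunc : Cardinal.aleph0 < κ)
    {ι : Type u} [Nonempty ι] (hι : (Cardinal.mk ι) < κ)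
    (E : ι → Set Ordinal.{u}) (hE : ∀ i, IsClubIn (E i) κ.ord) :
    IsClubIn (⋂ i, E i) κ.ord := by
  have hcof : κ.ord.cof = κ := hreg.cof_eq
  have hlim : Order.IsSuccLimit κ.ord := Cardinal.isSuccLimit_ord hreg.aleph0_le
  -- choice of points in each E i above a given ordinal
  have hex : ∀ (i : ι) (c : Ordinal.{u}), ∃ b, c < κ.ord → b ∈ E i ∧ c ≤ b := by
    intro i c
    by_cases h : c < κ.ord
    · obtain ⟨b, hb, hcb⟩ := (hE i).2.1 c h
      exact ⟨b, fun _ => ⟨hb, hcb⟩⟩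
    · exact ⟨0, fun h' => absurd h' h⟩
  choose e he using hex
  have helt : ∀ (i : ι) (c : Ordinal), c < κ.ord → e i c < κ.ord := fun i c hc =>
    (hE i).1 ((he i c hc).1)
  -- closedness of the intersection
  have hclosed : ∀ a < κ.ord, a ≠ 0 → sSup ((⋂ i, E i) ∩ Set.Iio a) = a → a ∈ ⋂ i, E i := by
    intro a ha ha0 hsup
    have hne : ((⋂ i, E i) ∩ Set.Iio a).Nonempty := by
      rw [Set.nonempty_iff_ne_empty]
      intro h
      rw [h, csSup_empty] at hsup
      exact ha0 (hsup.symm.trans (by simp))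
    refine Set.mem_iInter.2 fun i => (hE i).2.2 a ha ha0 (le_antisymm ?_ ?_)
    · exact csSup_le (hne.mono (Set.inter_subset_inter_left _ (Set.iInter_subset _ i)))
        (fun x hx => hx.2.le)
    · calc a = sSup ((⋂ i, E i) ∩ Set.Iio a) := hsup.symm
        _ ≤ sSup (E i ∩ Set.Iio a) := csSup_le_csSup ⟨a, fun x hx => hx.2.le⟩ hne
            (Set.inter_subset_inter_left _ (Set.iInter_subset _ i))
  refine ⟨(Set.iInter_subset _ (Classical.arbitrary ι)).trans (hE _).1, ?_, hclosed⟩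
  -- unboundedness
  intro a ha
  set g : Ordinal → Ordinal := fun c => (iSup fun i => e i c) + 1 with hg
  have hglt : ∀ c < κ.ord, g c < κ.ord := by
    intro c hc
    show (iSup fun i => e i c) + 1 < κ.ord
    rw [Ordinal.add_one_eq_succ]
    exact hlim.succ_lt (Ordinal.iSup_lt_of_lt_cof (by rwa [hcof]) fun i => helt i c hc)
  have hce : ∀ (i : ι) (c : Ordinal), c < κ.ord → e i c < g c := by
    intro i c hc
    exact lt_of_le_of_lt (Ordinal.le_iSup _ i) (lt_add_one _)
  have hcg : ∀ c < κ.ord, c < g c := fun c hc =>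
    lt_of_le_of_lt (he _ c hc).2 (hce (Classical.arbitrary ι) c hc)
  set f : ℕ → Ordinal := fun n => g^[n] (a + 1) with hf
  have hf0 : f 0 = a + 1 := rfl
  have hfs : ∀ n, f (n + 1) = g (f n) := fun n => Function.iterate_succ_apply' g n _
  have ha1 : a + 1 < κ.ord := by
    rw [Ordinal.add_one_eq_succ]; exact hlim.succ_lt ha
  have hflt : ∀ n, f n < κ.ord := by
    intro n; induction n with
    | zero => exact ha1
    | succ n ih => rw [hfs]; exact hglt _ ih
  set b : Ordinal := iSup (fun n : ULift.{u} ℕ => f n.down) with hb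
  have hfle : ∀ n, f n ≤ b := fun n => Ordinal.le_iSup (fun n : ULift.{u} ℕ => f n.down) (ULift.up n)
  have hbκ : b < κ.ord := by
    refine Ordinal.iSup_lt_of_lt_cof ?_ fun n => hflt n.down
    rw [Cardinal.mk_uLift, Cardinal.mk_nat, Cardinal.lift_aleph0, hcof]
    exact hunc
  have hbne : b ≠ 0 := by
    intro h
    have := hfle 0
    rw [h, hf0, nonpos_iff_eq_zero] at this
    exact (Ordinal.succ_ne_zero a) (by rwa [Ordinal.add_one_eq_succ] at this)
  have hfb : ∀ (i : ι) (n : ℕ), e i (f n) ∈ E i ∩ Set.Iio b := by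
    intro i n
    refine ⟨(he i _ (hflt n)).1, lt_of_lt_of_le ?_ (hfle (n + 1))⟩
    rw [hfs]; exact hce i _ (hflt n)
  have hbmem : b ∈ ⋂ i, E i := by
    refine Set.mem_iInter.2 fun i => (hE i).2.2 b hbκ hbne (le_antisymm ?_ ?_)
    · exact csSup_le ⟨_, hfb i 0⟩ fun x hx => hx.2.le
    · refine Ordinal.iSup_le fun n => ?_
      calc f n.down ≤ e i (f n.down) := (he i _ (hflt n.down)).2
        _ ≤ sSup (E i ∩ Set.Iio b) := le_csSup ⟨b, fun x hx => hx.2.le⟩ (hfb i n.down)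
  exact ⟨b, hbmem, le_trans (le_of_lt (lt_add_one a)) ((hf0 ▸ hfle 0))⟩

/-- if each `I_δ` is `σ`-indecomposable (σ regular uncountable,
σ < κ, κ regular uncountable), then the ideal `I` is `σ`-indecomposable. -/
theorem stmt2 (κ σ : Cardinal) (hκreg : κ.IsRegular)
    (hκunc : Cardinal.aleph0 < κ)
    (hσreg : σ.IsRegular) (hσunc : Cardinal.aleph0 < σ) (hσκ : σ < κ)
    (S : Set Ordinal) (hS : S ⊆ Set.Iio κ.ord)
    (C : Ordinal → Set Ordinal) (hC : ∀ δ ∈ S, C δ ⊆ Set.Iio δ)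
    (I : Ordinal → Set (Set Ordinal))
    (hIdown : ∀ δ ∈ S, ∀ A B : Set Ordinal, A ⊆ B → B ∈ I δ → A ∈ I δ)
    (hIunion : ∀ δ ∈ S, ∀ A B : Set Ordinal, A ∈ I δ → B ∈ I δ → A ∪ B ∈ I δ)
    (hIind : ∀ δ ∈ S, ∀ B : σ.ord.ToType → Set Ordinal, Monotone B →
      (∀ i, B i ∈ I δ) → (⋃ i, B i) ∈ I δ)
    (A : σ.ord.ToType → Set Ordinal) (hmono : Monotone A)
    (hA : ∀ i, MemIdP κ.ord S C I (A i)) :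
    MemIdP κ.ord S C I (⋃ i, A i) := by

  haveI : Nonempty σ.ord.ToType := Ordinal.toType_nonempty_iff_ne_zero.2 (by
    simp [Cardinal.ord_eq_zero, hσreg.pos.ne'])
  have hmk : Cardinal.mk σ.ord.ToType < κ := by
    rw [Cardinal.mk_toType, Cardinal.card_ord]; exact hσκ
  choose E hE1 hE2 using hA
  refine ⟨⋂ i, E i, isClubIn_iInter hκreg hκunc hmk E hE1, ?_⟩
  intro δ hδ
  have key : (⋃ i, A i) ∩ (⋂ i, E i) ∩ C δ = ⋃ i, (A i ∩ (⋂ j, E j) ∩ C δ) := by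
    rw [Set.iUnion_inter, Set.iUnion_inter]
  rw [key]
  refine hIind δ hδ.2 _ ?_ ?_
  · intro i j hij
    exact Set.inter_subset_inter (Set.inter_subset_inter (hmono hij) le_rfl) le_rfl
  · intro i
    refine hIdown δ hδ.2 _ (A i ∩ E i ∩ C δ) ?_ (hE2 i δ ⟨Set.mem_iInter.1 hδ.1 i, hδ.2⟩)
    exact Set.inter_subset_inter (Set.inter_subset_inter le_rfl (Set.iInter_subset _ i)) le_rfl
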